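/- For every r ∈ (0,1) ∪ (2,3) ∪ (4,∞) one has 2r² − 2r + 3 + 2r·3^{r−2} − 11·3^{r−2} > 0 (so that h_r''(1/4; a⁻) > 0); for every r ∈ (1,2) ∪ (3,4) one has 2r² − 2r + 3 + 2r·3^{r−2} − 11·3^{r−2} < 0 (so that h_r''(1/4; a⁻) < 0); and for r ∈ {1, 2, 3, 4} one has 2r² − 2r + 3 + 2r·3^{r−2} − 11·3^{r−2} = 0. -/

import Mathlib

noncomputable section

open Real Filter

namespace SignQuarterAux

open Set

/-- `E r = 3^(r-2)` written via `exp`. -/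
def E (r : ℝ) : ℝ := Real.exp (Real.log 3 * (r - 2))

def f (r : ℝ) : ℝ := 2*r^2 - 2*r + 3 + (2*r - 11) * E r
def f1 (r : ℝ) : ℝ := 4*r - 2 + (Real.log 3 * (2*r - 11) + 2) * E r
def f2 (r : ℝ) : ℝ := 4 + Real.log 3 * (Real.log 3 * (2*r - 11) + 4) * E r
def f3 (r : ℝ) : ℝ := (Real.log 3)^2 * (Real.log 3 * (2*r - 11) + 6) * E r

lemma Epos (r : ℝ) : 0 < E r := Real.exp_pos _

lemma hE (r : ℝ) : HasDerivAt E (Real.log 3 * E r) r := by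
  have h : HasDerivAt (fun r : ℝ => Real.log 3 * (r - 2)) (Real.log 3) r := by
    simpa using ((hasDerivAt_id r).sub_const 2).const_mul (Real.log 3)
  have h2 := h.exp
  convert h2 using 1
  all_goals try rfl
  unfold E; ring

lemma hcoef (r : ℝ) : HasDerivAt (fun r : ℝ => 2*r - 11) 2 r := by
  simpa using ((hasDerivAt_id r).const_mul (2:ℝ)).sub_const 11

lemma hf (r : ℝ) : HasDerivAt f (f1 r) r := by
  have h1 : HasDerivAt (fun r : ℝ => 2*r^2 - 2*r + 3) (4*r - 2) r := by
    have := (((hasDerivAt_pow 2 r).const_mul (2:ℝ)).sub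
      ((hasDerivAt_id r).const_mul (2:ℝ))).add_const 3
    convert this using 1 <;> first | rfl | ring
  have h2 := (hcoef r).mul (hE r)
  convert h1.add h2 using 1
  all_goals try rfl
  unfold f1; ring

lemma hf1 (r : ℝ) : HasDerivAt f1 (f2 r) r := by
  have h1 : HasDerivAt (fun r : ℝ => 4*r - 2) 4 r := by
    simpa using ((hasDerivAt_id r).const_mul (4:ℝ)).sub_const 2
  have hc : HasDerivAt (fun r : ℝ => Real.log 3 * (2*r - 11) + 2) (Real.log 3 * 2) r := by
    simpa using ((hcoef r).const_mul (Real.log 3)).add_const 2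
  have h2 := hc.mul (hE r)
  convert h1.add h2 using 1
  all_goals try rfl
  unfold f2; ring

lemma hf2 (r : ℝ) : HasDerivAt f2 (f3 r) r := by
  have hc : HasDerivAt (fun r : ℝ => Real.log 3 * (Real.log 3 * (2*r - 11) + 4))
      (Real.log 3 * (Real.log 3 * 2)) r := by
    exact (((hcoef r).const_mul (Real.log 3)).add_const 4).const_mul (Real.log 3)
  have h2 := hc.mul (hE r)
  have := (hasDerivAt_const r (4:ℝ)).add h2
  convert this using 1
  all_goals try rfl
  unfold f3; ring

lemma df : deriv f = f1 := funext fun r => (hf r).deriv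
lemma df1 : deriv f1 = f2 := funext fun r => (hf1 r).deriv
lemma df2 : deriv f2 = f3 := funext fun r => (hf2 r).deriv

lemma contf : Continuous f := by
  have h : Differentiable ℝ f := fun r => (hf r).differentiableAt
  exact h.continuous
lemma contf1 : Continuous f1 := by
  have h : Differentiable ℝ f1 := fun r => (hf1 r).differentiableAt
  exact h.continuous
lemma contf2 : Continuous f2 := by
  have h : Differentiable ℝ f2 := fun r => (hf2 r).differentiableAt
  exact h.continuous

lemma hL0 : 0 < Real.log 3 := Real.log_pos (by norm_num)

lemma hLlo : (1.0975 : ℝ) < Real.log 3 := by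
  rw [Real.lt_log_iff_exp_lt (by norm_num)]
  have h1 : Real.exp (1.0975 : ℝ) = Real.exp 1 * Real.exp 0.0975 := by
    rw [← Real.exp_add]; norm_num
  have h2 : Real.exp (0.0975 : ℝ) ≤ 1.103 := by
    have hb := Real.exp_bound' (x := 0.0975) (by norm_num) (by norm_num) (n := 3) (by norm_num)
    have hsum : (∑ m ∈ Finset.range 3, (0.0975:ℝ) ^ m / m.factorial) +
        (0.0975:ℝ) ^ 3 * (3 + 1) / (Nat.factorial 3 * 3) ≤ 1.103 := by
      simp [Finset.sum_range_succ, Nat.factorial]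
      norm_num
    linarith
  have h3 : Real.exp 1 < 2.7182818286 := Real.exp_one_lt_d9
  have h4 : (0:ℝ) < Real.exp 0.0975 := Real.exp_pos _
  rw [h1]
  nlinarith [Real.exp_pos (1:ℝ)]

lemma hLhi : Real.log 3 < 8/7 := by
  rw [Real.log_lt_iff_lt_exp (by norm_num)]
  have h1 : Real.exp (8/7 : ℝ) = Real.exp 1 * Real.exp (1/7) := by
    rw [← Real.exp_add]; norm_num
  have h2 : (1:ℝ) + 1/7 ≤ Real.exp (1/7) := by
    have := Real.add_one_le_exp (1/7 : ℝ); linarith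
  have h3 : (2.7182818283 : ℝ) < Real.exp 1 := Real.exp_one_gt_d9
  rw [h1]
  nlinarith [Real.exp_pos (1:ℝ)]

/-- The unique zero of `f3` (i.e. of `f'''`). -/
def r0 : ℝ := 11/2 - 3 / Real.log 3

lemma r0_ge : (2:ℝ) ≤ r0 := by
  have h : 3 / Real.log 3 ≤ 3.5 := by
    rw [div_le_iff₀ hL0]; nlinarith [hLlo]
  unfold r0; linarith

lemma r0_le : r0 ≤ (3:ℝ) := by
  have h : (2.5:ℝ) ≤ 3 / Real.log 3 := by
    rw [le_div_iff₀ hL0]; nlinarith [hLhi]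
  unfold r0; linarith

lemma f3_neg {x : ℝ} (hx : x < r0) : f3 x < 0 := by
  have hL := hL0
  have h1 : 2*x - 11 < -(6 / Real.log 3) := by
    have : (6:ℝ) / Real.log 3 = 2 * (3 / Real.log 3) := by ring
    rw [this]; unfold r0 at hx; linarith
  have h2 : Real.log 3 * (2*x - 11) < Real.log 3 * (-(6 / Real.log 3)) :=
    mul_lt_mul_of_pos_left h1 hL
  have h3 : Real.log 3 * (-(6 / Real.log 3)) = -6 := by field_simp
  have h4 : Real.log 3 * (2*x - 11) + 6 < 0 := by rw [h3] at h2; linarith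
  have h5 : (Real.log 3)^2 * (Real.log 3 * (2*x - 11) + 6) < 0 :=
    mul_neg_of_pos_of_neg (pow_pos hL 2) h4
  exact mul_neg_of_neg_of_pos h5 (Epos x)

lemma f3_pos {x : ℝ} (hx : r0 < x) : 0 < f3 x := by
  have hL := hL0
  have h1 : -(6 / Real.log 3) < 2*x - 11 := by
    have : (6:ℝ) / Real.log 3 = 2 * (3 / Real.log 3) := by ring
    rw [this]; unfold r0 at hx; linarith
  have h2 : Real.log 3 * (-(6 / Real.log 3)) < Real.log 3 * (2*x - 11) :=
    mul_lt_mul_of_pos_left h1 hL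
  have h3 : Real.log 3 * (-(6 / Real.log 3)) = -6 := by field_simp
  have h4 : 0 < Real.log 3 * (2*x - 11) + 6 := by rw [h3] at h2; linarith
  exact mul_pos (mul_pos (pow_pos hL 2) h4) (Epos x)

lemma f2_anti : StrictAntiOn f2 (Iic r0) := by
  apply strictAntiOn_of_deriv_neg (convex_Iic _) contf2.continuousOn
  intro x hx
  rw [interior_Iic] at hx
  rw [df2]; exact f3_neg hx

lemma f2_mono : StrictMonoOn f2 (Ici r0) := by
  apply strictMonoOn_of_deriv_pos (convex_Ici _) contf2.continuousOn
  intro x hx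
  rw [interior_Ici] at hx
  rw [df2]; exact f3_pos hx

lemma E1 : E 1 = 1/3 := by
  unfold E
  rw [show Real.log 3 * ((1:ℝ) - 2) = -Real.log 3 by ring, Real.exp_neg,
    Real.exp_log (by norm_num : (0:ℝ) < 3)]
  norm_num

lemma E2 : E 2 = 1 := by simp [E]

lemma E3 : E 3 = 3 := by
  unfold E
  rw [show Real.log 3 * ((3:ℝ) - 2) = Real.log 3 by ring,
    Real.exp_log (by norm_num : (0:ℝ) < 3)]

lemma E4 : E 4 = 9 := by
  unfold E
  rw [show Real.log 3 * ((4:ℝ) - 2) = Real.log 3 + Real.log 3 by ring, Real.exp_add,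
    Real.exp_log (by norm_num : (0:ℝ) < 3)]
  norm_num

lemma f2_1 : 0 < f2 1 := by
  have h : f2 1 = 4 + Real.log 3 * (Real.log 3 * (-9) + 4) * (1/3) := by
    unfold f2; rw [E1]; norm_num
  rw [h]; nlinarith [hLhi, hL0]

lemma f2_2 : f2 2 < 0 := by
  have h : f2 2 = 4 + Real.log 3 * (Real.log 3 * (-7) + 4) := by
    unfold f2; rw [E2]; norm_num
  rw [h]; nlinarith [hLlo, hL0]

lemma f2_3 : f2 3 < 0 := by
  have h : f2 3 = 4 + Real.log 3 * (Real.log 3 * (-5) + 4) * 3 := by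
    unfold f2; rw [E3]; norm_num
  rw [h]; nlinarith [hLlo, hL0]

lemma f2_4 : 0 < f2 4 := by
  have h : f2 4 = 4 + Real.log 3 * (Real.log 3 * (-3) + 4) * 9 := by
    unfold f2; rw [E4]; norm_num
  rw [h]; nlinarith [hLhi, hL0]

lemma f1_1 : f1 1 < 0 := by
  have h : f1 1 = 2 + (Real.log 3 * (-9) + 2) * (1/3) := by
    unfold f1; rw [E1]; norm_num
  rw [h]; nlinarith [hLlo]

lemma f1_2 : 0 < f1 2 := by
  have h : f1 2 = 6 + (Real.log 3 * (-7) + 2) := by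
    unfold f1; rw [E2]; norm_num
  rw [h]; nlinarith [hLhi]

lemma f1_3 : f1 3 < 0 := by
  have h : f1 3 = 10 + (Real.log 3 * (-5) + 2) * 3 := by
    unfold f1; rw [E3]; norm_num
  rw [h]; nlinarith [hLlo]

lemma f1_4 : 0 < f1 4 := by
  have h : f1 4 = 14 + (Real.log 3 * (-3) + 2) * 9 := by
    unfold f1; rw [E4]; norm_num
  rw [h]; nlinarith [hLhi]

lemma fval1 : f 1 = 0 := by unfold f; rw [E1]; norm_num
lemma fval2 : f 2 = 0 := by unfold f; rw [E2]; norm_num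
lemma fval3 : f 3 = 0 := by unfold f; rw [E3]; norm_num
lemma fval4 : f 4 = 0 := by unfold f; rw [E4]; norm_num

/-- Main sign lemma for `f`. -/
lemma main (r : ℝ) : (r < 1 → 0 < f r) ∧ (1 < r → r < 2 → f r < 0) ∧
    (2 < r → r < 3 → 0 < f r) ∧ (3 < r → r < 4 → f r < 0) ∧ (4 < r → 0 < f r) := by
  -- s₁ : zero of f2 in (1,2)
  obtain ⟨s₁, hs₁mem, hs₁⟩ : ∃ s ∈ Ioo (1:ℝ) 2, f2 s = 0 := by
    have := intermediate_value_Ioo' (le_of_lt one_lt_two)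
      (contf2.continuousOn (s := Icc 1 2))
    have h0 : (0:ℝ) ∈ Ioo (f2 2) (f2 1) := ⟨f2_2, f2_1⟩
    obtain ⟨s, hs, hfs⟩ := this h0
    exact ⟨s, hs, hfs⟩
  -- s₂ : zero of f2 in (3,4)
  obtain ⟨s₂, hs₂mem, hs₂⟩ : ∃ s ∈ Ioo (3:ℝ) 4, f2 s = 0 := by
    have := intermediate_value_Ioo (by norm_num : (3:ℝ) ≤ 4)
      (contf2.continuousOn (s := Icc 3 4))
    obtain ⟨s, hs, hfs⟩ := this ⟨f2_3, f2_4⟩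
    exact ⟨s, hs, hfs⟩
  have hs₁r0 : s₁ ≤ r0 := le_trans (le_of_lt hs₁mem.2) r0_ge
  have hr0s₂ : r0 ≤ s₂ := le_trans r0_le (le_of_lt hs₂mem.1)
  -- sign of f2
  have f2_pos_lt : ∀ x < s₁, 0 < f2 x := fun x hx => by
    have := f2_anti (le_trans (le_of_lt hx) hs₁r0 : x ∈ Iic r0) (hs₁r0 : s₁ ∈ Iic r0) hx
    rw [hs₁] at this; exact this
  have f2_neg_mid : ∀ x, s₁ < x → x < s₂ → f2 x < 0 := by
    intro x h1 h2
    rcases le_or_gt x r0 with hc | hc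
    · have := f2_anti (hs₁r0 : s₁ ∈ Iic r0) (hc : x ∈ Iic r0) h1
      rw [hs₁] at this; exact this
    · have := f2_mono (le_of_lt hc : x ∈ Ici r0) (hr0s₂ : s₂ ∈ Ici r0) h2
      rw [hs₂] at this; exact this
  have f2_pos_gt : ∀ x, s₂ < x → 0 < f2 x := fun x hx => by
    have := f2_mono (hr0s₂ : s₂ ∈ Ici r0) (le_trans hr0s₂ (le_of_lt hx) : x ∈ Ici r0) hx
    rw [hs₂] at this; exact this
  -- monotonicity of f1
  have f1_mono_left : StrictMonoOn f1 (Iic s₁) := by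
    apply strictMonoOn_of_deriv_pos (convex_Iic _) contf1.continuousOn
    intro x hx; rw [interior_Iic] at hx; rw [df1]; exact f2_pos_lt x hx
  have f1_anti_mid : StrictAntiOn f1 (Icc s₁ s₂) := by
    apply strictAntiOn_of_deriv_neg (convex_Icc _ _) contf1.continuousOn
    intro x hx; rw [interior_Icc] at hx; rw [df1]; exact f2_neg_mid x hx.1 hx.2
  have f1_mono_right : StrictMonoOn f1 (Ici s₂) := by
    apply strictMonoOn_of_deriv_pos (convex_Ici _) contf1.continuousOn
    intro x hx; rw [interior_Ici] at hx; rw [df1]; exact f2_pos_gt x hx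
  have hs₁s₂ : s₁ ≤ s₂ := le_trans hs₁r0 hr0s₂
  have h2mem : (2:ℝ) ∈ Icc s₁ s₂ := ⟨le_of_lt hs₁mem.2, le_trans (by norm_num) (le_of_lt hs₂mem.1)⟩
  have h3mem : (3:ℝ) ∈ Icc s₁ s₂ := ⟨le_trans (le_of_lt hs₁mem.2) (by norm_num), le_of_lt hs₂mem.1⟩
  -- f1 at s₁ is positive, f1 at s₂ is negative
  have hf1s₁ : 0 < f1 s₁ := by
    rcases eq_or_lt_of_le h2mem.1 with h | h
    · rw [h]; exact f1_2
    · have := f1_anti_mid (left_mem_Icc.2 hs₁s₂) h2mem h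
      exact lt_trans f1_2 this
  have hf1s₂ : f1 s₂ < 0 := by
    rcases eq_or_lt_of_le h3mem.2 with h | h
    · rw [← h]; exact f1_3
    · have := f1_anti_mid h3mem (right_mem_Icc.2 hs₁s₂) h
      exact lt_trans this f1_3
  -- z₁ : zero of f1 in (1, s₁)
  obtain ⟨z₁, hz₁mem, hz₁⟩ : ∃ z ∈ Ioo (1:ℝ) s₁, f1 z = 0 := by
    have := intermediate_value_Ioo (le_of_lt hs₁mem.1) (contf1.continuousOn (s := Icc 1 s₁))
    obtain ⟨z, hz, hfz⟩ := this ⟨f1_1, hf1s₁⟩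
    exact ⟨z, hz, hfz⟩
  -- z₂ : zero of f1 in (s₁, s₂)
  obtain ⟨z₂, hz₂mem, hz₂⟩ : ∃ z ∈ Ioo s₁ s₂, f1 z = 0 := by
    have := intermediate_value_Ioo' hs₁s₂ (contf1.continuousOn (s := Icc s₁ s₂))
    obtain ⟨z, hz, hfz⟩ := this ⟨hf1s₂, hf1s₁⟩
    exact ⟨z, hz, hfz⟩
  -- z₃ : zero of f1 in (s₂, 4)
  obtain ⟨z₃, hz₃mem, hz₃⟩ : ∃ z ∈ Ioo s₂ 4, f1 z = 0 := by
    have := intermediate_value_Ioo (le_of_lt hs₂mem.2) (contf1.continuousOn (s := Icc s₂ 4))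
    obtain ⟨z, hz, hfz⟩ := this ⟨hf1s₂, f1_4⟩
    exact ⟨z, hz, hfz⟩
  -- z₂ ∈ (2,3)
  have hz₂gt2 : 2 < z₂ := by
    by_contra h
    push_neg at h
    rcases eq_or_lt_of_le h with h' | h'
    · exact absurd (h' ▸ hz₂) f1_2.ne'
    · have := f1_anti_mid ⟨le_of_lt hz₂mem.1, le_of_lt hz₂mem.2⟩ h2mem h'
      rw [hz₂] at this
      exact absurd f1_2 (not_lt.2 (le_of_lt this))
  have hz₂lt3 : z₂ < 3 := by
    by_contra h
    push_neg at h
    rcases eq_or_lt_of_le h with h' | h'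
    · exact absurd (show f1 3 = 0 by rw [h']; exact hz₂) f1_3.ne
    · have := f1_anti_mid h3mem ⟨le_of_lt hz₂mem.1, le_of_lt hz₂mem.2⟩ h'
      rw [hz₂] at this
      exact absurd f1_3 (not_lt.2 (le_of_lt this))
  -- sign of f1
  have f1_neg1 : ∀ x < z₁, f1 x < 0 := fun x hx => by
    have hz₁s₁ : z₁ ≤ s₁ := le_of_lt hz₁mem.2
    have := f1_mono_left (le_trans (le_of_lt hx) hz₁s₁ : x ∈ Iic s₁) (hz₁s₁ : z₁ ∈ Iic s₁) hx
    rw [hz₁] at this; exact this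
  have f1_pos1 : ∀ x, z₁ < x → x < z₂ → 0 < f1 x := by
    intro x h1 h2
    rcases le_or_gt x s₁ with hc | hc
    · have := f1_mono_left (le_of_lt hz₁mem.2 : z₁ ∈ Iic s₁) (hc : x ∈ Iic s₁) h1
      rw [hz₁] at this; exact this
    · have := f1_anti_mid ⟨le_of_lt hc, le_trans (le_of_lt h2) (le_of_lt hz₂mem.2)⟩
        ⟨le_of_lt hz₂mem.1, le_of_lt hz₂mem.2⟩ h2
      rw [hz₂] at this; exact this
  have f1_neg2 : ∀ x, z₂ < x → x < z₃ → f1 x < 0 := by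
    intro x h1 h2
    rcases le_or_gt x s₂ with hc | hc
    · have := f1_anti_mid ⟨le_of_lt hz₂mem.1, le_of_lt hz₂mem.2⟩
        ⟨le_trans (le_of_lt hz₂mem.1) (le_of_lt h1), hc⟩ h1
      rw [hz₂] at this; exact this
    · have := f1_mono_right (le_of_lt hc : x ∈ Ici s₂)
        (le_of_lt hz₃mem.1 : z₃ ∈ Ici s₂) h2
      rw [hz₃] at this; exact this
  have f1_pos2 : ∀ x, z₃ < x → 0 < f1 x := fun x hx => by
    have := f1_mono_right (le_of_lt hz₃mem.1 : z₃ ∈ Ici s₂)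
      (le_trans (le_of_lt hz₃mem.1) (le_of_lt hx) : x ∈ Ici s₂) hx
    rw [hz₃] at this; exact this
  -- monotonicity of f
  have f_anti1 : StrictAntiOn f (Iic z₁) := by
    apply strictAntiOn_of_deriv_neg (convex_Iic _) contf.continuousOn
    intro x hx; rw [interior_Iic] at hx; rw [df]; exact f1_neg1 x hx
  have f_mono1 : StrictMonoOn f (Icc z₁ z₂) := by
    apply strictMonoOn_of_deriv_pos (convex_Icc _ _) contf.continuousOn
    intro x hx; rw [interior_Icc] at hx; rw [df]; exact f1_pos1 x hx.1 hx.2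
  have f_anti2 : StrictAntiOn f (Icc z₂ z₃) := by
    apply strictAntiOn_of_deriv_neg (convex_Icc _ _) contf.continuousOn
    intro x hx; rw [interior_Icc] at hx; rw [df]; exact f1_neg2 x hx.1 hx.2
  have f_mono2 : StrictMonoOn f (Ici z₃) := by
    apply strictMonoOn_of_deriv_pos (convex_Ici _) contf.continuousOn
    intro x hx; rw [interior_Ici] at hx; rw [df]; exact f1_pos2 x hx
  have hz₁z₂ : z₁ < z₂ := lt_trans hz₁mem.2 hz₂mem.1
  have hz₂z₃ : z₂ < z₃ := lt_of_lt_of_le hz₂mem.2 (le_of_lt hz₃mem.1)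
  have h1z₁ : (1:ℝ) < z₁ := hz₁mem.1
  have hz₁2 : z₁ < 2 := lt_of_lt_of_le hz₁mem.2 (le_of_lt hs₁mem.2)
  have h3z₃ : (3:ℝ) < z₃ := lt_trans hs₂mem.1 hz₃mem.1
  have hz₃4 : z₃ < 4 := hz₃mem.2
  refine ⟨?_, ?_, ?_, ?_, ?_⟩
  · intro hr
    have := f_anti1 (le_trans (le_of_lt hr) (le_of_lt h1z₁) : r ∈ Iic z₁)
      (le_of_lt h1z₁ : (1:ℝ) ∈ Iic z₁) hr
    rw [fval1] at this; exact this
  · intro h1 h2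
    rcases le_or_gt r z₁ with hc | hc
    · have := f_anti1 (le_of_lt h1z₁ : (1:ℝ) ∈ Iic z₁) (hc : r ∈ Iic z₁) h1
      rw [fval1] at this; exact this
    · have := f_mono1 ⟨le_of_lt hc, le_trans (le_of_lt h2) (le_of_lt hz₂gt2)⟩
        ⟨le_of_lt hz₁2, le_of_lt hz₂gt2⟩ h2
      rw [fval2] at this; exact this
  · intro h1 h2
    rcases le_or_gt r z₂ with hc | hc
    · have := f_mono1 ⟨le_of_lt hz₁2, le_of_lt hz₂gt2⟩
        ⟨le_trans (le_of_lt hz₁2) (le_of_lt h1), hc⟩ h1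
      rw [fval2] at this; exact this
    · have := f_anti2 ⟨le_of_lt hc, le_trans (le_of_lt h2) (le_of_lt h3z₃)⟩
        ⟨le_of_lt hz₂lt3, le_of_lt h3z₃⟩ h2
      rw [fval3] at this; exact this
  · intro h1 h2
    rcases le_or_gt r z₃ with hc | hc
    · have := f_anti2 ⟨le_of_lt hz₂lt3, le_of_lt h3z₃⟩
        ⟨le_trans (le_of_lt hz₂lt3) (le_of_lt h1), hc⟩ h1
      rw [fval3] at this; exact this
    · have := f_mono2 (le_of_lt hc : r ∈ Ici z₃) (le_of_lt hz₃4 : (4:ℝ) ∈ Ici z₃) h2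
      rw [fval4] at this; exact this
  · intro hr
    have := f_mono2 (le_of_lt hz₃4 : (4:ℝ) ∈ Ici z₃)
      (le_trans (le_of_lt hz₃4) (le_of_lt hr) : r ∈ Ici z₃) hr
    rw [fval4] at this; exact this

lemma expr_eq (r : ℝ) :
    2 * r ^ 2 - 2 * r + 3 + 2 * r * (3 : ℝ) ^ (r - 2) - 11 * (3 : ℝ) ^ (r - 2) = f r := by
  have h : (3:ℝ) ^ (r - 2) = E r := Real.rpow_def_of_pos (by norm_num) _
  rw [h]; unfold f; ring

end SignQuarterAux

/-- Sign of `2r² − 2r + 3 + 2r·3^{r−2} − 11·3^{r−2}` (up to the positive factor `8·4^{−r}`,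
this is `h_r''(1/4; a⁻)`): positive on `(0,1) ∪ (2,3) ∪ (4,∞)`, negative on
`(1,2) ∪ (3,4)`, and zero at `r = 1, 2, 3, 4`. -/
theorem sign_second_deriv_quarter (r : ℝ) :
    (r ∈ Set.Ioo (0 : ℝ) 1 ∪ Set.Ioo 2 3 ∪ Set.Ioi 4 →
      0 < 2 * r ^ 2 - 2 * r + 3 + 2 * r * (3 : ℝ) ^ (r - 2) - 11 * (3 : ℝ) ^ (r - 2)) ∧
    (r ∈ Set.Ioo (1 : ℝ) 2 ∪ Set.Ioo 3 4 →
      2 * r ^ 2 - 2 * r + 3 + 2 * r * (3 : ℝ) ^ (r - 2) - 11 * (3 : ℝ) ^ (r - 2) < 0) ∧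
    (r ∈ ({1, 2, 3, 4} : Set ℝ) →
      2 * r ^ 2 - 2 * r + 3 + 2 * r * (3 : ℝ) ^ (r - 2) - 11 * (3 : ℝ) ^ (r - 2) = 0) := by
  rw [SignQuarterAux.expr_eq r]
  obtain ⟨h1, h2, h3, h4, h5⟩ := SignQuarterAux.main r
  refine ⟨?_, ?_, ?_⟩
  · rintro ((⟨ha, hb⟩ | ⟨ha, hb⟩) | ha)
    · exact h1 hb
    · exact h3 ha hb
    · exact h5 ha
  · rintro (⟨ha, hb⟩ | ⟨ha, hb⟩)
    · exact h2 ha hb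
    · exact h4 ha hb
  · rintro (rfl | rfl | rfl | rfl)
    · exact SignQuarterAux.fval1
    · exact SignQuarterAux.fval2
    · exact SignQuarterAux.fval3
    · exact SignQuarterAux.fval4

end
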